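/- Let R be a commutative ring. The relation F ∼ G on noncommutative formal power series with invertible constant coefficient in one complex parameter τ (defined by: FG⁻¹ has each non-constant coefficient of size O(|τ|^{1−ε}) as τ → 0, for every ε > 0) is an equivalence relation compatible with products, provided all series involved have logarithmic growth (each coefficient is O(log^r|τ|) for some r as τ → 0). In particular, the classes of series with logarithmic growth and of series asymptotic to 1 are stable under products and inversion. -/

import Mathlib

open Filter Asymptotics
open scoped Topology

/-- The (concatenation) product of noncommutative formal power series, given by their
coefficient functions on words. -/
noncomputable def convMul {α : Type*} (A B : List α → ℂ) : List α → ℂ :=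
  fun w => ∑ k ∈ Finset.range (w.length + 1), A (w.take k) * B (w.drop k)

/-- The unit series `1`. -/
def deltaOne {α : Type*} : List α → ℂ :=
  fun w => match w with
  | [] => 1
  | _ :: _ => 0

/-- Concatenation powers of a series. -/
noncomputable def convPow {α : Type*} (F : List α → ℂ) : ℕ → List α → ℂ
  | 0 => deltaOne
  | k + 1 => convMul F (convPow F k)

/-- The inverse `F⁻¹ = Σ_k (−1)^k (F−1)^k` of a series with constant coefficient `1`
(coefficientwise, the sum is finite). -/
noncomputable def convInv {α : Type*} (F : List α → ℂ) : List α → ℂ :=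
  fun w => ∑ k ∈ Finset.range (w.length + 1),
    (-1 : ℂ) ^ k * convPow (fun u => F u - deltaOne u) k w

/-- A `τ`-dependent series has logarithmic growth if each coefficient is
`O(log^r |τ|)` for some `r`, as `τ → 0`. -/
def LogGrowth {n : ℕ} (F : ℂ → List (Fin (n + 1)) → ℂ) : Prop :=
  ∀ w : List (Fin (n + 1)), ∃ r : ℕ,
    (fun τ => F τ w) =O[𝓝[≠] (0 : ℂ)] fun τ => Real.log (‖τ‖) ^ r

/-- A `τ`-dependent series (with constant coefficient `1`) is asymptotic to `1` if each
non-constant coefficient is `O(|τ|^{1−ε})` for every `ε > 0`, as `τ → 0`. -/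
def AsympOne {n : ℕ} (F : ℂ → List (Fin (n + 1)) → ℂ) : Prop :=
  ∀ w : List (Fin (n + 1)), w ≠ [] → ∀ ε : ℝ, 0 < ε →
    (fun τ => F τ w) =O[𝓝[≠] (0 : ℂ)] fun τ => ‖τ‖ ^ (1 - ε)

/-- The relation `F ∼ G` (as `τ → 0`): `F·G⁻¹` is asymptotic to `1`. -/
noncomputable def SRel {n : ℕ} (F G : ℂ → List (Fin (n + 1)) → ℂ) : Prop :=
  AsympOne fun τ => convMul (F τ) (convInv (G τ))

section Algebra
variable {α : Type*}

lemma deltaOne_of_ne_nil {w : List α} (hw : w ≠ []) : (deltaOne : List α → ℂ) w = 0 := by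
  cases w with
  | nil => exact absurd rfl hw
  | cons a l => rfl

lemma one_convMul (A : List α → ℂ) : convMul deltaOne A = A := by
  funext w
  rw [convMul, Finset.sum_eq_single 0]
  · simp [deltaOne]
  · intro b hb hb0
    have hw : w ≠ [] := by
      rintro rfl; simp at hb; omega
    rw [deltaOne_of_ne_nil (by simp [List.take_eq_nil_iff, hb0, hw]), zero_mul]
  · intro h; simp at h

lemma convMul_one (A : List α → ℂ) : convMul A deltaOne = A := by
  funext w
  rw [convMul, Finset.sum_eq_single w.length]
  · simp [deltaOne]
  · intro b hb hb0
    have : w.drop b ≠ [] := by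
      simp only [ne_eq, List.drop_eq_nil_iff]
      simp at hb; omega
    rw [deltaOne_of_ne_nil this, mul_zero]
  · intro h; simp at h

lemma convMul_add (A B C : List α → ℂ) : convMul A (B + C) = convMul A B + convMul A C := by
  funext w
  simp [convMul, mul_add, Finset.sum_add_distrib]

lemma add_convMul (A B C : List α → ℂ) : convMul (A + B) C = convMul A C + convMul B C := by
  funext w
  simp [convMul, add_mul, Finset.sum_add_distrib]

lemma convMul_assoc (A B C : List α → ℂ) :
    convMul (convMul A B) C = convMul A (convMul B C) := by
  funext w
  set L := w.length with hL
  have lhs : convMul (convMul A B) C w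
      = ∑ k ∈ Finset.Ico 0 (L + 1), ∑ j ∈ Finset.Ico 0 (k + 1),
          A (w.take j) * (B ((w.drop j).take (k - j)) * C (w.drop k)) := by
    rw [convMul]
    rw [show Finset.range (L+1) = Finset.Ico 0 (L+1) by rw [Finset.range_eq_Ico]]
    refine Finset.sum_congr rfl ?_
    intro k hk
    simp only [Finset.mem_Ico] at hk
    rw [convMul, Finset.sum_mul]
    have hlen : (w.take k).length = min k L := by simp [hL]
    rw [show Finset.range ((w.take k).length + 1) = Finset.Ico 0 (k+1) by
      rw [Finset.range_eq_Ico]; congr 1; omega]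
    refine Finset.sum_congr rfl ?_
    intro j hj
    simp only [Finset.mem_Ico] at hj
    rw [List.take_take, min_eq_left (by omega), List.drop_take, mul_assoc]
  have rhs : convMul A (convMul B C) w
      = ∑ j ∈ Finset.Ico 0 (L + 1), ∑ k ∈ Finset.Ico j (L + 1),
          A (w.take j) * (B ((w.drop j).take (k - j)) * C (w.drop k)) := by
    rw [convMul]
    rw [show Finset.range (L+1) = Finset.Ico 0 (L+1) by rw [Finset.range_eq_Ico]]
    refine Finset.sum_congr rfl ?_
    intro j hj
    simp only [Finset.mem_Ico] at hj
    rw [convMul, Finset.mul_sum]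
    have hlen : (w.drop j).length = L - j := by simp [hL]
    rw [hlen]
    rw [show Finset.Ico j (L+1) = Finset.map ⟨fun i => j + i, fun a b h => by simpa using h⟩
        (Finset.range (L - j + 1)) from ?_]
    · rw [Finset.sum_map]
      refine Finset.sum_congr rfl ?_
      intro i hi
      show _ = A (w.take j) * (B ((w.drop j).take (j + i - j)) * C (w.drop (j + i)))
      rw [Nat.add_sub_cancel_left, List.drop_drop]
    · ext x
      simp only [Finset.mem_Ico, Finset.mem_map, Finset.mem_range, Function.Embedding.coeFn_mk]
      constructor
      · intro h; exact ⟨x - j, by omega, by change j + (x - j) = x; omega⟩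
      · rintro ⟨i, hi, rfl⟩; change j ≤ j + i ∧ j + i < L + 1; omega
  rw [lhs, rhs, Finset.sum_Ico_Ico_comm]

end Algebra

section Inv
variable {α : Type*}

lemma convMul_nil (A B : List α → ℂ) : convMul A B [] = A [] * B [] := by
  simp [convMul]

lemma convPow_zero_lt (A : List α → ℂ) (hA : A [] = 0) :
    ∀ k (w : List α), w.length < k → convPow A k w = 0 := by
  intro k
  induction k with
  | zero => intro w hw; omega
  | succ k ih =>
    intro w hw
    rw [convPow, convMul]
    refine Finset.sum_eq_zero ?_
    intro j hj
    simp only [Finset.mem_range] at hj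
    rcases Nat.eq_zero_or_pos j with rfl | hj0
    · simp [hA]
    · rw [ih (w.drop j) (by simp; omega), mul_zero]

lemma convInv_eq_sum (F : List α → ℂ) (hF : F [] = 1) (w : List α) (N : ℕ)
    (hN : w.length ≤ N) :
    convInv F w = ∑ k ∈ Finset.range (N + 1),
      (-1 : ℂ) ^ k * convPow (fun u => F u - deltaOne u) k w := by
  rw [convInv]
  refine Finset.sum_subset ?_ ?_
  · intro x hx; simp only [Finset.mem_range] at *; omega
  · intro k hk hk2
    simp only [Finset.mem_range] at hk hk2
    rw [convPow_zero_lt _ (by simp [hF, deltaOne]) k w (by omega), mul_zero]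

lemma convInv_nil (F : List α → ℂ) : convInv F [] = 1 := by
  simp [convInv, convPow, deltaOne]

lemma convMul_convInv (F : List α → ℂ) (hF : F [] = 1) :
    convMul F (convInv F) = deltaOne := by
  set E : List α → ℂ := fun u => F u - deltaOne u with hE
  have hE0 : E [] = 0 := by simp [hE, hF, deltaOne]
  have hFsplit : F = deltaOne + E := by funext u; simp [hE]
  have main : convMul F (convInv F) = convInv F + convMul E (convInv F) := by
    have h := add_convMul deltaOne E (convInv F)
    rw [one_convMul] at h
    rw [← hFsplit] at h
    exact h
  rw [main]
  funext w
  rw [Pi.add_apply]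
  set L := w.length with hL
  have key : convMul E (convInv F) w
      = ∑ k ∈ Finset.range (L + 1), (-1 : ℂ) ^ k * convPow E (k + 1) w := by
    rw [convMul]
    have step : ∀ j ∈ Finset.range (L + 1),
        E (w.take j) * convInv F (w.drop j)
        = ∑ k ∈ Finset.range (L + 1),
            (-1 : ℂ) ^ k * (E (w.take j) * convPow E k (w.drop j)) := by
      intro j hj
      rw [convInv_eq_sum F hF (w.drop j) L (by simp [hL]), Finset.mul_sum]
      refine Finset.sum_congr rfl fun k _ => by ring
    rw [Finset.sum_congr rfl step, Finset.sum_comm]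
    refine Finset.sum_congr rfl fun k _ => ?_
    rw [← Finset.mul_sum]
    rfl
  rw [key, convInv_eq_sum F hF w (L + 1) (by omega), ← hE]
  rw [Finset.sum_range_succ' (fun k => (-1 : ℂ) ^ k * convPow E k w) (L + 1)]
  simp only [Pi.add_apply, pow_succ, pow_zero, one_mul]
  have : ∀ k, (-1 : ℂ) ^ k * (-1) * convPow E (k+1) w
      = -((-1 : ℂ) ^ k * convPow E (k+1) w) := fun k => by ring
  rw [Finset.sum_congr rfl fun k _ => this k, Finset.sum_neg_distrib]
  have hP0 : convPow E 0 w = deltaOne w := rfl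
  rw [hP0]
  ring

lemma convInv_convMul (F : List α → ℂ) (hF : F [] = 1) :
    convMul (convInv F) F = deltaOne := by
  have h1 : convMul F (convInv F) = deltaOne := convMul_convInv F hF
  have h2 : convMul (convInv F) (convInv (convInv F)) = deltaOne :=
    convMul_convInv _ (convInv_nil F)
  have hFc : F = convInv (convInv F) := by
    calc F = convMul F deltaOne := (convMul_one F).symm
    _ = convMul F (convMul (convInv F) (convInv (convInv F))) := by rw [h2]
    _ = convMul (convMul F (convInv F)) (convInv (convInv F)) := (convMul_assoc ..).symm
    _ = convInv (convInv F) := by rw [h1, one_convMul]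
  rwa [← hFc] at h2

lemma convInv_unique {A B C : List α → ℂ} (h1 : convMul C A = deltaOne)
    (h2 : convMul A B = deltaOne) : C = B := by
  calc C = convMul C deltaOne := (convMul_one C).symm
  _ = convMul C (convMul A B) := by rw [h2]
  _ = convMul (convMul C A) B := (convMul_assoc ..).symm
  _ = B := by rw [h1, one_convMul]

lemma convInv_eq_of {A B : List α → ℂ} (hA : A [] = 1) (h : convMul A B = deltaOne) :
    convInv A = B :=
  convInv_unique (convInv_convMul A hA) h

lemma convInv_convMul_eq (A B : List α → ℂ) (hA : A [] = 1) (hB : B [] = 1) :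
    convInv (convMul A B) = convMul (convInv B) (convInv A) := by
  refine convInv_eq_of (by rw [convMul_nil, hA, hB, one_mul]) ?_
  calc convMul (convMul A B) (convMul (convInv B) (convInv A))
      = convMul A (convMul (convMul B (convInv B)) (convInv A)) := by
        rw [convMul_assoc, convMul_assoc]
  _ = deltaOne := by rw [convMul_convInv B hB, one_convMul, convMul_convInv A hA]

end Inv

section Asymp

def IsLogB (f : ℂ → ℂ) : Prop :=
  ∃ r : ℕ, f =O[𝓝[≠] (0 : ℂ)] fun τ => Real.log (‖τ‖) ^ r

def IsSmallB (f : ℂ → ℂ) : Prop :=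
  ∀ ε : ℝ, 0 < ε → f =O[𝓝[≠] (0 : ℂ)] fun τ => ‖τ‖ ^ (1 - ε)

lemma ev_abs (c : ℝ) (hc : 0 < c) :
    ∀ᶠ τ : ℂ in 𝓝[≠] (0 : ℂ), ‖τ‖ < c ∧ 0 < ‖τ‖ := by
  have h1 : ∀ᶠ τ : ℂ in 𝓝[≠] (0 : ℂ), ‖τ‖ < c := by
    have : Tendsto (fun τ : ℂ => ‖τ‖) (𝓝[≠] (0 : ℂ)) (𝓝 0) := by
      simpa using ((continuous_norm (E := ℂ)).tendsto 0).mono_left nhdsWithin_le_nhds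
    exact this.eventually_lt_const hc
  have h2 : ∀ᶠ τ : ℂ in 𝓝[≠] (0 : ℂ), τ ≠ 0 := eventually_mem_nhdsWithin
  filter_upwards [h1, h2] with τ hτ hτ0
  exact ⟨hτ, norm_pos_iff.mpr hτ0⟩

lemma log_pow_mono {r s : ℕ} (h : r ≤ s) :
    (fun τ : ℂ => Real.log (‖τ‖) ^ r) =O[𝓝[≠] (0 : ℂ)]
      fun τ => Real.log (‖τ‖) ^ s := by
  refine IsBigO.of_bound 1 ?_
  filter_upwards [ev_abs (Real.exp (-1)) (Real.exp_pos _)] with τ ⟨h1, h2⟩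
  have hlog : Real.log (‖τ‖) < -1 := by
    have := Real.log_lt_log h2 h1
    rwa [Real.log_exp] at this
  have habs : 1 ≤ |Real.log (‖τ‖)| := by
    rw [abs_of_neg (by linarith)]; linarith
  rw [one_mul, Real.norm_eq_abs, Real.norm_eq_abs, abs_pow, abs_pow]
  exact pow_le_pow_right₀ habs h

lemma IsLogB.add {f g : ℂ → ℂ} (hf : IsLogB f) (hg : IsLogB g) : IsLogB (f + g) := by
  obtain ⟨r, hr⟩ := hf
  obtain ⟨s, hs⟩ := hg
  exact ⟨max r s, (hr.trans (log_pow_mono (le_max_left r s))).add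
    (hs.trans (log_pow_mono (le_max_right r s)))⟩

lemma IsLogB.add' {f g : ℂ → ℂ} (hf : IsLogB f) (hg : IsLogB g) :
    IsLogB (fun τ => f τ + g τ) := hf.add hg

lemma IsLogB.mul {f g : ℂ → ℂ} (hf : IsLogB f) (hg : IsLogB g) :
    IsLogB (fun τ => f τ * g τ) := by
  obtain ⟨r, hr⟩ := hf
  obtain ⟨s, hs⟩ := hg
  refine ⟨r + s, ?_⟩
  have := hr.mul hs
  simpa [← pow_add] using this

lemma islogB_const (c : ℂ) : IsLogB (fun _ => c) := by
  refine ⟨0, ?_⟩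
  simp only [pow_zero]
  rcases eq_or_ne c 0 with rfl | hc
  · exact isBigO_zero _ _
  · exact isBigO_const_const c one_ne_zero _

lemma IsLogB.neg {f : ℂ → ℂ} (hf : IsLogB f) : IsLogB (fun τ => -f τ) := by
  obtain ⟨r, hr⟩ := hf; exact ⟨r, hr.neg_left⟩

lemma IsLogB.sub {f g : ℂ → ℂ} (hf : IsLogB f) (hg : IsLogB g) :
    IsLogB (fun τ => f τ - g τ) := by
  simpa [sub_eq_add_neg] using hf.add' hg.neg

lemma islogB_sum {ι : Type*} (s : Finset ι) (f : ι → ℂ → ℂ)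
    (h : ∀ i ∈ s, IsLogB (f i)) : IsLogB (fun τ => ∑ i ∈ s, f i τ) := by
  classical
  induction s using Finset.induction_on with
  | empty => simpa using islogB_const 0
  | @insert a s' hx ih =>
    simp only [Finset.sum_insert hx]
    exact (h a (Finset.mem_insert_self a s')).add'
      (ih fun i hi => h i (Finset.mem_insert_of_mem hi))

lemma tendsto_abs_nhdsGT : Tendsto (fun τ : ℂ => ‖τ‖)
    (𝓝[≠] (0 : ℂ)) (𝓝[>] (0 : ℝ)) := by
  rw [tendsto_nhdsWithin_iff]
  constructor
  · simpa using ((continuous_norm (E := ℂ)).tendsto 0).mono_left nhdsWithin_le_nhds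
  · filter_upwards [eventually_mem_nhdsWithin] with τ hτ
    exact norm_pos_iff.mpr hτ

lemma tendsto_rpow_mul_abs_log (a : ℝ) (ha : 0 < a) (r : ℕ) :
    Tendsto (fun x : ℝ => x ^ a * |Real.log x| ^ r) (𝓝[>] (0 : ℝ)) (𝓝 0) := by
  rcases Nat.eq_zero_or_pos r with rfl | hr
  · simp only [pow_zero, mul_one]
    have h := (Real.continuousAt_rpow_const 0 a (Or.inr ha.le)).tendsto
    rw [Real.zero_rpow ha.ne'] at h
    exact h.mono_left nhdsWithin_le_nhds
  · have h0 : Tendsto (fun x : ℝ => -(Real.log x * x ^ (a / r))) (𝓝[>] (0 : ℝ)) (𝓝 0) := by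
      simpa using (tendsto_log_mul_rpow_nhdsGT_zero (by positivity)).neg
    have h1 : Tendsto (fun x : ℝ => (-(Real.log x * x ^ (a / r))) ^ r)
        (𝓝[>] (0 : ℝ)) (𝓝 0) := by
      have := h0.pow r
      simpa [zero_pow hr.ne'] using this
    refine h1.congr' ?_
    filter_upwards [Ioo_mem_nhdsGT_of_mem (by norm_num : (0:ℝ) ∈ Set.Ico 0 1)]
      with x hx
    obtain ⟨hx0, hx1⟩ := hx
    have hlog : Real.log x < 0 := Real.log_neg hx0 hx1
    have hxa : (x ^ (a / r)) ^ r = x ^ a := by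
      rw [← Real.rpow_natCast (x ^ (a / r)) r, ← Real.rpow_mul hx0.le]
      congr 1
      field_simp
    rw [neg_mul_eq_neg_mul, mul_pow, hxa]
    rw [abs_of_neg hlog]
    ring

lemma IsSmallB.mul_log {f g : ℂ → ℂ} (hf : IsSmallB f) (hg : IsLogB g) :
    IsSmallB (fun τ => f τ * g τ) := by
  obtain ⟨r, hr⟩ := hg
  intro ε hε
  have h1 : (fun τ => f τ * g τ) =O[𝓝[≠] (0 : ℂ)]
      fun τ => ‖τ‖ ^ (1 - ε / 2) * Real.log (‖τ‖) ^ r :=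
    (hf (ε / 2) (by linarith)).mul hr
  refine h1.trans (IsBigO.of_bound 1 ?_)
  have hev : ∀ᶠ τ : ℂ in 𝓝[≠] (0 : ℂ),
      ‖τ‖ ^ (ε / 2) * |Real.log (‖τ‖)| ^ r ≤ 1 := by
    have := (tendsto_rpow_mul_abs_log (ε / 2) (by linarith) r).comp tendsto_abs_nhdsGT
    have h2 := this.eventually (eventually_le_nhds (by norm_num : (0:ℝ) < 1))
    filter_upwards [h2] with τ hτ using hτ
  filter_upwards [hev, ev_abs 1 one_pos] with τ hτ ⟨_, hpos⟩
  rw [one_mul, Real.norm_eq_abs, Real.norm_eq_abs, abs_mul, abs_pow,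
    abs_of_nonneg (Real.rpow_nonneg (norm_nonneg τ) (1 - ε / 2)),
    abs_of_nonneg (Real.rpow_nonneg (norm_nonneg τ) (1 - ε))]
  have hsplit : ‖τ‖ ^ (1 - ε / 2)
      = ‖τ‖ ^ (1 - ε) * ‖τ‖ ^ (ε / 2) := by
    rw [← Real.rpow_add hpos]; ring_nf
  rw [hsplit, mul_assoc]
  calc ‖τ‖ ^ (1 - ε) * (‖τ‖ ^ (ε / 2) * |Real.log (‖τ‖)| ^ r)
      ≤ ‖τ‖ ^ (1 - ε) * 1 :=
        mul_le_mul_of_nonneg_left hτ (Real.rpow_nonneg (norm_nonneg τ) _)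
  _ = ‖τ‖ ^ (1 - ε) := mul_one _

lemma IsLogB.mul_small {f g : ℂ → ℂ} (hf : IsLogB f) (hg : IsSmallB g) :
    IsSmallB (fun τ => f τ * g τ) := by
  have := hg.mul_log hf
  simpa [mul_comm] using this

lemma IsSmallB.islogB {f : ℂ → ℂ} (hf : IsSmallB f) : IsLogB f := by
  refine ⟨0, (hf (1/2) (by norm_num)).trans (IsBigO.of_bound 1 ?_)⟩
  filter_upwards [ev_abs 1 one_pos] with τ ⟨h1, h2⟩
  rw [one_mul, pow_zero, Real.norm_eq_abs, Real.norm_eq_abs,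
    abs_of_nonneg (Real.rpow_nonneg (norm_nonneg τ) _)]
  simpa using Real.rpow_le_one (norm_nonneg τ) h1.le (by norm_num)

lemma issmallB_zero : IsSmallB (fun _ => (0 : ℂ)) := fun ε _ => isBigO_zero _ _

lemma IsSmallB.add {f g : ℂ → ℂ} (hf : IsSmallB f) (hg : IsSmallB g) :
    IsSmallB (fun τ => f τ + g τ) := fun ε hε => (hf ε hε).add (hg ε hε)

lemma issmallB_sum {ι : Type*} (s : Finset ι) (f : ι → ℂ → ℂ)
    (h : ∀ i ∈ s, IsSmallB (f i)) : IsSmallB (fun τ => ∑ i ∈ s, f i τ) := by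
  classical
  induction s using Finset.induction_on with
  | empty => simpa using issmallB_zero
  | @insert a s' hx ih =>
    simp only [Finset.sum_insert hx]
    exact (h a (Finset.mem_insert_self a s')).add
      (ih fun i hi => h i (Finset.mem_insert_of_mem hi))

lemma IsSmallB.const_mul {f : ℂ → ℂ} (hf : IsSmallB f) (c : ℂ) :
    IsSmallB (fun τ => c * f τ) := fun ε hε => (hf ε hε).const_mul_left c

end Asymp

section MoreAlg
variable {α : Type*}

lemma convMul_decomp (A B : List α → ℂ) :
    convMul A B = deltaOne + (fun u => A u - deltaOne u) + (fun u => B u - deltaOne u)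
      + convMul (fun u => A u - deltaOne u) (fun u => B u - deltaOne u) := by
  set EA : List α → ℂ := fun u => A u - deltaOne u with hEA
  set EB : List α → ℂ := fun u => B u - deltaOne u with hEB
  have hA : A = deltaOne + EA := by funext u; simp [hEA]
  have hB : B = deltaOne + EB := by funext u; simp [hEB]
  calc convMul A B = convMul (deltaOne + EA) (deltaOne + EB) := by rw [← hA, ← hB]
  _ = _ := by
    rw [add_convMul, convMul_add, convMul_add, one_convMul, one_convMul, convMul_one]
    abel

lemma convMul_decompL (M X : List α → ℂ) :
    convMul M X = X + convMul (fun u => M u - deltaOne u) X := by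
  set EM : List α → ℂ := fun u => M u - deltaOne u with hEM
  have hM : M = deltaOne + EM := by funext u; simp [hEM]
  calc convMul M X = convMul (deltaOne + EM) X := by rw [← hM]
  _ = _ := by rw [add_convMul, one_convMul]

lemma convMul_convInv_cancel (A B C : List α → ℂ) (hB : B [] = 1) :
    convMul (convMul A (convInv B)) (convMul B C) = convMul A C := by
  rw [convMul_assoc, ← convMul_assoc (convInv B), convInv_convMul B hB, one_convMul]

end MoreAlg

section Family
variable {n : ℕ}

def SmallFam (A : ℂ → List (Fin (n + 1)) → ℂ) : Prop :=
  ∀ w : List (Fin (n + 1)), IsSmallB fun τ => A τ w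

lemma logGrowth_convMul {F G : ℂ → List (Fin (n + 1)) → ℂ}
    (hF : LogGrowth F) (hG : LogGrowth G) :
    LogGrowth (fun τ => convMul (F τ) (G τ)) := fun w =>
  islogB_sum (Finset.range (w.length + 1))
    (fun k τ => F τ (w.take k) * G τ (w.drop k))
    (fun k _ => IsLogB.mul (hF (w.take k)) (hG (w.drop k)))

lemma logGrowth_deltaOne : LogGrowth (fun _ : ℂ => (deltaOne : List (Fin (n + 1)) → ℂ)) :=
  fun w => islogB_const (deltaOne w)

lemma logGrowth_convPow {A : ℂ → List (Fin (n + 1)) → ℂ} (hA : LogGrowth A) :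
    ∀ k, LogGrowth (fun τ => convPow (A τ) k)
  | 0 => logGrowth_deltaOne
  | k + 1 => logGrowth_convMul hA (logGrowth_convPow hA k)

lemma logGrowth_sub_delta {F : ℂ → List (Fin (n + 1)) → ℂ} (hF : LogGrowth F) :
    LogGrowth (fun τ u => F τ u - deltaOne u) := fun w =>
  IsLogB.sub (hF w) (islogB_const (deltaOne w))

lemma logGrowth_convInv {F : ℂ → List (Fin (n + 1)) → ℂ} (hF : LogGrowth F) :
    LogGrowth (fun τ => convInv (F τ)) := fun w =>
  islogB_sum (Finset.range (w.length + 1))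
    (fun k τ => (-1 : ℂ) ^ k * convPow (fun u => F τ u - deltaOne u) k w)
    (fun k _ => IsLogB.mul (islogB_const ((-1 : ℂ) ^ k))
      (logGrowth_convPow (logGrowth_sub_delta hF) k w))

lemma smallFam_convMul_log {A B : ℂ → List (Fin (n + 1)) → ℂ}
    (hA : SmallFam A) (hB : LogGrowth B) :
    SmallFam (fun τ => convMul (A τ) (B τ)) := fun w =>
  issmallB_sum (Finset.range (w.length + 1))
    (fun k τ => A τ (w.take k) * B τ (w.drop k))
    (fun k _ => IsSmallB.mul_log (hA (w.take k)) (hB (w.drop k)))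

lemma logFam_convMul_small {A B : ℂ → List (Fin (n + 1)) → ℂ}
    (hA : LogGrowth A) (hB : SmallFam B) :
    SmallFam (fun τ => convMul (A τ) (B τ)) := fun w =>
  issmallB_sum (Finset.range (w.length + 1))
    (fun k τ => A τ (w.take k) * B τ (w.drop k))
    (fun k _ => IsLogB.mul_small (hA (w.take k)) (hB (w.drop k)))

lemma logGrowth_of_smallFam {A : ℂ → List (Fin (n + 1)) → ℂ} (hA : SmallFam A) :
    LogGrowth A := fun w => IsSmallB.islogB (hA w)

lemma smallFam_of_asympOne {F : ℂ → List (Fin (n + 1)) → ℂ}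
    (hF1 : ∀ τ, F τ [] = 1) (hF : AsympOne F) :
    SmallFam (fun τ u => F τ u - deltaOne u) := by
  intro w
  rcases eq_or_ne w [] with rfl | hw
  · have : (fun τ => F τ ([] : List (Fin (n + 1))) - deltaOne ([] : List (Fin (n + 1)))) = fun _ => (0 : ℂ) := by
      funext τ; simp [hF1 τ, deltaOne]
    rw [this]; exact issmallB_zero
  · have : (fun τ => F τ w - deltaOne w) = fun τ => F τ w := by
      funext τ; rw [deltaOne_of_ne_nil hw, sub_zero]
    rw [this]; exact hF w hw

lemma asympOne_of_smallFam {F : ℂ → List (Fin (n + 1)) → ℂ}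
    (hF : SmallFam (fun τ u => F τ u - deltaOne u)) : AsympOne F := by
  intro w hw
  have : (fun τ => F τ w) = fun τ => F τ w - deltaOne w := by
    funext τ; rw [deltaOne_of_ne_nil hw, sub_zero]
  rw [this]; exact hF w

lemma asympOne_convInv' {F : ℂ → List (Fin (n + 1)) → ℂ}
    (hF1 : ∀ τ, F τ [] = 1) (hF : AsympOne F) (hFlog : LogGrowth F) :
    AsympOne (fun τ => convInv (F τ)) := by
  have hE : SmallFam (fun τ u => F τ u - deltaOne u) := smallFam_of_asympOne hF1 hF
  have hElog : LogGrowth (fun τ u => F τ u - deltaOne u) := logGrowth_sub_delta hFlog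
  intro w hw
  show IsSmallB fun τ => convInv (F τ) w
  have : (fun τ => convInv (F τ) w) = fun τ => ∑ k ∈ Finset.range (w.length + 1),
      (-1 : ℂ) ^ k * convPow (fun u => F τ u - deltaOne u) k w := rfl
  rw [this]
  refine issmallB_sum _ _ ?_
  intro k _
  cases k with
  | zero =>
    have : (fun τ => (-1 : ℂ) ^ 0 * convPow (fun u => F τ u - deltaOne u) 0 w)
        = fun _ => (0 : ℂ) := by
      funext τ; simp [convPow, deltaOne_of_ne_nil hw]
    rw [this]; exact issmallB_zero
  | succ k =>
    have hs : SmallFam (fun τ => convPow (fun u => F τ u - deltaOne u) (k + 1)) := by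
      have := smallFam_convMul_log hE (logGrowth_convPow hElog k)
      exact this
    exact IsSmallB.const_mul (hs w) ((-1 : ℂ) ^ (k + 1))

lemma asympOne_mul' {A B : ℂ → List (Fin (n + 1)) → ℂ}
    (hA : AsympOne A) (hB : AsympOne B)
    (hA1 : ∀ τ, A τ [] = 1) (hB1 : ∀ τ, B τ [] = 1) :
    AsympOne (fun τ => convMul (A τ) (B τ)) := by
  have hEA : SmallFam (fun τ u => A τ u - deltaOne u) := smallFam_of_asympOne hA1 hA
  have hEB : SmallFam (fun τ u => B τ u - deltaOne u) := smallFam_of_asympOne hB1 hB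
  have hprod : SmallFam (fun τ => convMul (fun u => A τ u - deltaOne u)
      (fun u => B τ u - deltaOne u)) :=
    smallFam_convMul_log hEA (logGrowth_of_smallFam hEB)
  intro w hw
  have hdec : (fun τ => convMul (A τ) (B τ) w)
      = fun τ => deltaOne w + (A τ w - deltaOne w) + (B τ w - deltaOne w)
          + convMul (fun u => A τ u - deltaOne u) (fun u => B τ u - deltaOne u) w := by
    funext τ
    rw [convMul_decomp (A τ) (B τ)]
    simp [Pi.add_apply]
  rw [hdec]
  simp only [deltaOne_of_ne_nil hw, sub_zero, zero_add]
  exact IsSmallB.add (IsSmallB.add (hA w hw) (hB w hw)) (hprod w)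

end Family


section Main
variable {n : ℕ}

lemma srel_smallFam {F G : ℂ → List (Fin (n + 1)) → ℂ}
    (hF1 : ∀ τ, F τ [] = 1) (hG1 : ∀ τ, G τ [] = 1) (h : SRel F G) :
    AsympOne (fun τ => convMul (F τ) (convInv (G τ))) := h

lemma fginv_nil {F G : ℂ → List (Fin (n + 1)) → ℂ}
    (hF1 : ∀ τ, F τ [] = 1) (τ : ℂ) :
    convMul (F τ) (convInv (G τ)) [] = 1 := by
  rw [convMul_nil, hF1, convInv_nil, one_mul]

theorem stmt19' {n : ℕ} (F G H F' G' : ℂ → List (Fin (n + 1)) → ℂ)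
    (hF1 : ∀ τ, F τ [] = 1) (hG1 : ∀ τ, G τ [] = 1) (hH1 : ∀ τ, H τ [] = 1)
    (hF'1 : ∀ τ, F' τ [] = 1) (hG'1 : ∀ τ, G' τ [] = 1)
    (hFlog : LogGrowth F) (hGlog : LogGrowth G) (hHlog : LogGrowth H)
    (hF'log : LogGrowth F') (hG'log : LogGrowth G') :
    SRel F F ∧
      (SRel F G → SRel G F) ∧
      (SRel F G → SRel G H → SRel F H) ∧
      (SRel F F' → SRel G G' →
        SRel (fun τ => convMul (F τ) (G τ)) (fun τ => convMul (F' τ) (G' τ))) ∧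
      LogGrowth (fun τ => convMul (F τ) (G τ)) ∧
      LogGrowth (fun τ => convInv (F τ)) ∧
      (AsympOne F → AsympOne G → AsympOne (fun τ => convMul (F τ) (G τ))) ∧
      (AsympOne F → AsympOne (fun τ => convInv (F τ))) := by
  refine ⟨?_, ?_, ?_, ?_, ?_, ?_, ?_, ?_⟩
  · -- reflexivity
    intro w hw ε hε
    have hid : ∀ τ : ℂ, convMul (F τ) (convInv (F τ)) = deltaOne :=
      fun τ => convMul_convInv (F τ) (hF1 τ)
    simp only [hid, deltaOne_of_ne_nil hw]
    exact isBigO_zero _ _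
  · -- symmetry
    intro hFG
    have hA1 : ∀ τ, convMul (F τ) (convInv (G τ)) [] = 1 := fginv_nil hF1
    have hAlog : LogGrowth (fun τ => convMul (F τ) (convInv (G τ))) :=
      logGrowth_convMul hFlog (logGrowth_convInv hGlog)
    have hAinv : AsympOne (fun τ => convInv (convMul (F τ) (convInv (G τ)))) :=
      asympOne_convInv' hA1 hFG hAlog
    have key : ∀ τ : ℂ, convInv (convMul (F τ) (convInv (G τ)))
        = convMul (G τ) (convInv (F τ)) := by
      intro τ
      refine convInv_eq_of (hA1 τ) ?_
      rw [convMul_convInv_cancel (F τ) (G τ) (convInv (F τ)) (hG1 τ)]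
      exact convMul_convInv (F τ) (hF1 τ)
    show AsympOne fun τ => convMul (G τ) (convInv (F τ))
    rw [show (fun τ => convMul (G τ) (convInv (F τ)))
        = fun τ => convInv (convMul (F τ) (convInv (G τ))) from
      funext fun τ => (key τ).symm]
    exact hAinv
  · -- transitivity
    intro hFG hGH
    have key : ∀ τ : ℂ, convMul (F τ) (convInv (H τ))
        = convMul (convMul (F τ) (convInv (G τ))) (convMul (G τ) (convInv (H τ))) :=
      fun τ => (convMul_convInv_cancel (F τ) (G τ) (convInv (H τ)) (hG1 τ)).symm
    show AsympOne fun τ => convMul (F τ) (convInv (H τ))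
    rw [show (fun τ => convMul (F τ) (convInv (H τ)))
        = fun τ => convMul (convMul (F τ) (convInv (G τ)))
            (convMul (G τ) (convInv (H τ))) from funext key]
    exact asympOne_mul' hFG hGH (fginv_nil hF1) (fginv_nil hG1)
  · -- product compatibility
    intro hFF' hGG'
    set M : ℂ → List (Fin (n + 1)) → ℂ := fun τ => convMul (G τ) (convInv (G' τ)) with hM
    have hM1 : ∀ τ, M τ [] = 1 := fginv_nil hG1
    have hEM : SmallFam (fun τ u => M τ u - deltaOne u) := smallFam_of_asympOne hM1 hGG'
    have hF'inv : LogGrowth (fun τ => convInv (F' τ)) := logGrowth_convInv hF'log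
    have hsecond : SmallFam (fun τ => convMul (F τ)
        (convMul (fun u => M τ u - deltaOne u) (convInv (F' τ)))) :=
      logFam_convMul_small hFlog (smallFam_convMul_log hEM hF'inv)
    have key : ∀ τ : ℂ, convMul (convMul (F τ) (G τ)) (convInv (convMul (F' τ) (G' τ)))
        = convMul (F τ) (convInv (F' τ))
          + convMul (F τ) (convMul (fun u => M τ u - deltaOne u) (convInv (F' τ))) := by
      intro τ
      rw [convInv_convMul_eq (F' τ) (G' τ) (hF'1 τ) (hG'1 τ)]
      rw [convMul_assoc, ← convMul_assoc (G τ)]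
      rw [show convMul (G τ) (convInv (G' τ)) = M τ from rfl]
      rw [convMul_decompL (M τ) (convInv (F' τ)), convMul_add]
    intro w hw
    show IsSmallB fun τ => convMul (convMul (F τ) (G τ)) (convInv (convMul (F' τ) (G' τ))) w
    have : (fun τ => convMul (convMul (F τ) (G τ)) (convInv (convMul (F' τ) (G' τ))) w)
        = fun τ => convMul (F τ) (convInv (F' τ)) w
            + convMul (F τ) (convMul (fun u => M τ u - deltaOne u) (convInv (F' τ))) w := by
      funext τ; rw [key τ]; rfl
    rw [this]
    exact IsSmallB.add (hFF' w hw) (hsecond w)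
  · exact logGrowth_convMul hFlog hGlog
  · exact logGrowth_convInv hFlog
  · intro hF hG
    exact asympOne_mul' hF hG hF1 hG1
  · intro hF
    exact asympOne_convInv' hF1 hF hFlog

end Main

/-- for series with constant coefficient `1` and logarithmic growth,
the relation `F ∼ G ⇔ FG⁻¹ asymptotic to 1` is an equivalence relation compatible with
products; moreover the classes of series with logarithmic growth and of series asymptotic
to `1` are stable under products and inversion. -/
theorem stmt19 {n : ℕ} (F G H F' G' : ℂ → List (Fin (n + 1)) → ℂ)
    (hF1 : ∀ τ, F τ [] = 1) (hG1 : ∀ τ, G τ [] = 1) (hH1 : ∀ τ, H τ [] = 1)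
    (hF'1 : ∀ τ, F' τ [] = 1) (hG'1 : ∀ τ, G' τ [] = 1)
    (hFlog : LogGrowth F) (hGlog : LogGrowth G) (hHlog : LogGrowth H)
    (hF'log : LogGrowth F') (hG'log : LogGrowth G') :
    SRel F F ∧
      (SRel F G → SRel G F) ∧
      (SRel F G → SRel G H → SRel F H) ∧
      (SRel F F' → SRel G G' →
        SRel (fun τ => convMul (F τ) (G τ)) (fun τ => convMul (F' τ) (G' τ))) ∧
      LogGrowth (fun τ => convMul (F τ) (G τ)) ∧
      LogGrowth (fun τ => convInv (F τ)) ∧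
      (AsympOne F → AsympOne G → AsympOne (fun τ => convMul (F τ) (G τ))) ∧
      (AsympOne F → AsympOne (fun τ => convInv (F τ))) := by
  exact stmt19' F G H F' G' hF1 hG1 hH1 hF'1 hG'1 hFlog hGlog hHlog hF'log hG'log
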